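/- Let F be a q-srgi map that satisfies assumption (A), and suppose there exists x₀ ∈ X such that Colev_{<^l}(F, F(x₀)) is relatively compact. If F(X) is P-bounded, then l-SWEff(F) is nonempty. -/

import Mathlib

open Pointwise

/-- The Gerstewitz scalarization function `ψ^q_P(y) = sup {t : ℝ | y ∈ t • q + P}`. -/
noncomputable def psi {Y : Type*} [AddCommGroup Y] [Module ℝ Y] (P : Set Y) (q : Y) (y : Y) : ℝ :=
  sSup {t : ℝ | y - t • q ∈ P}

/-- Assumption (A): `ψ^q_P` attains its infimum on `F(x)` for all `x`. -/
def AssumptionA {X Y : Type*} [AddCommGroup Y] [Module ℝ Y]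
    (P : Set Y) (q : Y) (F : X → Set Y) : Prop :=
  ∀ x : X, ∃ z ∈ F x, ∀ w ∈ F x, psi P q z ≤ psi P q w

/-- The colevel set of `F` at height `B ⊆ Y`: `{x : F(x) ⊄ B + int P}`. -/
def ColevB {X Y : Type*} [AddCommGroup Y] [Module ℝ Y] [TopologicalSpace Y]
    (P : Set Y) (F : X → Set Y) (B : Set Y) : Set X :=
  {x | ¬ F x ⊆ B + interior P}

/-- The colevel set of `F` at height `λ • q`:
`Colev_{<ˡ}(F, λq) = {x ∈ X : F(x) ⊄ λ • q + int P}`. -/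
def Colev {X Y : Type*} [AddCommGroup Y] [Module ℝ Y] [TopologicalSpace Y]
    (P : Set Y) (q : Y) (F : X → Set Y) (lam : ℝ) : Set X :=
  {x | ¬ F x ⊆ {y : Y | y - lam • q ∈ interior P}}

/-- `M_F^q = sup {t ∈ ℝ : F(X) ⊆ t • q + P} ∈ ℝ ∪ {±∞}` (with `sup ∅ = -∞`). -/
noncomputable def Mq {X Y : Type*} [AddCommGroup Y] [Module ℝ Y]
    (P : Set Y) (q : Y) (F : X → Set Y) : EReal :=
  sSup ((fun t : ℝ => (t : EReal)) '' {t : ℝ | ∀ x : X, ∀ z ∈ F x, z - t • q ∈ P})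

/-- `F` is `q`-srgi: if `λ > M_F^q` and `x₀ ∉ Colev_{<ˡ}(F, λq)`, then there exist a
neighborhood `U` of `x₀` and a real `r > M_F^q` with `U ∩ Colev_{<ˡ}(F, rq) = ∅`. -/
def Srgi {X Y : Type*} [TopologicalSpace X] [AddCommGroup Y] [Module ℝ Y] [TopologicalSpace Y]
    (P : Set Y) (q : Y) (F : X → Set Y) : Prop :=
  ∀ lam : ℝ, Mq P q F < (lam : EReal) → ∀ x₀ : X, x₀ ∉ Colev P q F lam →
    ∃ U ∈ nhds x₀, ∃ r : ℝ, Mq P q F < (r : EReal) ∧ U ∩ Colev P q F r = ∅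

/-- `x̄` is a strict weakly `l`-efficient solution of (SOP). -/
def SWEff {X Y : Type*} [AddCommGroup Y] [Module ℝ Y] [TopologicalSpace Y]
    (P : Set Y) (F : X → Set Y) (xbar : X) : Prop :=
  ¬ ∃ x : X, x ≠ xbar ∧ F xbar ⊆ F x + interior P

/-- A set `A ⊆ Y` is `P`-bounded if for every neighborhood `U` of `0` there is `r > 0`
with `A ⊆ r • U + P`. -/
def PBounded {Y : Type*} [AddCommGroup Y] [Module ℝ Y] [TopologicalSpace Y]
    (P : Set Y) (A : Set Y) : Prop :=
  ∀ U ∈ nhds (0 : Y), ∃ r : ℝ, 0 < r ∧ A ⊆ r • U + P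


section GerstewitzAux

variable {Y : Type*} [AddCommGroup Y] [Module ℝ Y] [TopologicalSpace Y]
  [IsTopologicalAddGroup Y] [ContinuousSMul ℝ Y]

lemma psiAux_add_mem {P : Set Y} (hPconv : Convex ℝ P)
    (hPcone : ∀ c : ℝ, 0 < c → ∀ y ∈ P, c • y ∈ P)
    {a b : Y} (ha : a ∈ P) (hb : b ∈ P) : a + b ∈ P := by
  have h := hPconv ha hb (by norm_num : (0:ℝ) ≤ 1/2) (by norm_num : (0:ℝ) ≤ 1/2)
    (by norm_num : (1/2 : ℝ) + 1/2 = 1)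
  have h2 := hPcone 2 (by norm_num) _ h
  have heq : (2:ℝ) • ((1/2:ℝ) • a + (1/2:ℝ) • b) = a + b := by
    rw [smul_add, smul_smul, smul_smul]; norm_num
  rwa [heq] at h2

lemma psiAux_add_interior {P : Set Y} (hPconv : Convex ℝ P)
    (hPcone : ∀ c : ℝ, 0 < c → ∀ y ∈ P, c • y ∈ P)
    {u p : Y} (hu : u ∈ interior P) (hp : p ∈ P) : u + p ∈ interior P := by
  have hopen : IsOpen ((fun z : Y => z + p) '' interior P) :=
    (Homeomorph.addRight p).isOpenMap _ isOpen_interior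
  have hsub : (fun z : Y => z + p) '' interior P ⊆ P := by
    rintro _ ⟨w, hw, rfl⟩
    exact psiAux_add_mem hPconv hPcone (interior_subset hw) hp
  exact interior_maximal hsub hopen ⟨u, hu, rfl⟩

lemma psiAux_smul_interior {P : Set Y}
    (hPcone : ∀ c : ℝ, 0 < c → ∀ y ∈ P, c • y ∈ P)
    {c : ℝ} (hc : 0 < c) {u : Y} (hu : u ∈ interior P) : c • u ∈ interior P := by
  have hopen : IsOpen (c • interior P) := isOpen_interior.smul₀ (ne_of_gt hc)
  have hsub : c • interior P ⊆ P := by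
    rintro _ ⟨w, hw, rfl⟩
    exact hPcone c hc _ (interior_subset hw)
  exact interior_maximal hsub hopen ⟨u, hu, rfl⟩

lemma psiAux_zero_not_interior {P : Set Y}
    (hPcone : ∀ c : ℝ, 0 < c → ∀ y ∈ P, c • y ∈ P)
    (hPuniv : P ≠ Set.univ) : (0:Y) ∉ interior P := by
  intro h0
  apply hPuniv
  ext y
  simp only [Set.mem_univ, iff_true]
  have hcont : Continuous fun c : ℝ => c • y := continuous_id.smul continuous_const
  have hopen : IsOpen {c : ℝ | c • y ∈ interior P} := isOpen_interior.preimage hcont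
  have hmem : (0:ℝ) ∈ {c : ℝ | c • y ∈ interior P} := by
    simpa using h0
  obtain ⟨ε, hε, hball⟩ := Metric.mem_nhds_iff.mp (hopen.mem_nhds hmem)
  have hc : (ε/2 : ℝ) ∈ Metric.ball (0:ℝ) ε := by
    simp only [Metric.mem_ball, Real.dist_eq, sub_zero]
    rw [abs_of_pos (by positivity)]
    linarith
  have h1 : (ε/2 : ℝ) • y ∈ P := interior_subset (hball hc)
  have h2 := hPcone (ε/2)⁻¹ (by positivity) _ h1
  rwa [smul_smul, inv_mul_cancel₀ (by positivity : (ε/2 : ℝ) ≠ 0), one_smul] at h2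

lemma psiAux_Sset_nonempty {P : Set Y}
    (hPcone : ∀ c : ℝ, 0 < c → ∀ y ∈ P, c • y ∈ P)
    {q : Y} (hq : q ∈ interior P) (y : Y) :
    {t : ℝ | y - t • q ∈ P}.Nonempty := by
  have hcont : Continuous fun c : ℝ => c • y + q :=
    (continuous_id.smul continuous_const).add continuous_const
  have hopen : IsOpen {c : ℝ | c • y + q ∈ interior P} := isOpen_interior.preimage hcont
  have hmem : (0:ℝ) ∈ {c : ℝ | c • y + q ∈ interior P} := by simpa using hq
  obtain ⟨ε, hε, hball⟩ := Metric.mem_nhds_iff.mp (hopen.mem_nhds hmem)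
  have hc : (ε/2 : ℝ) ∈ Metric.ball (0:ℝ) ε := by
    simp only [Metric.mem_ball, Real.dist_eq, sub_zero]
    rw [abs_of_pos (by positivity)]
    linarith
  have h1 : (ε/2 : ℝ) • y + q ∈ P := interior_subset (hball hc)
  have h2 := hPcone (ε/2)⁻¹ (by positivity) _ h1
  refine ⟨-(ε/2)⁻¹, ?_⟩
  have heq : (ε/2 : ℝ)⁻¹ • ((ε/2 : ℝ) • y + q) = y - (-(ε/2:ℝ)⁻¹) • q := by
    rw [smul_add, smul_smul, inv_mul_cancel₀ (by positivity : (ε/2 : ℝ) ≠ 0), one_smul,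
      neg_smul, sub_neg_eq_add]
  rwa [heq] at h2

lemma psiAux_Sset_bddAbove {P : Set Y} (hPclosed : IsClosed P) (hPconv : Convex ℝ P)
    (hPcone : ∀ c : ℝ, 0 < c → ∀ y ∈ P, c • y ∈ P) (hPuniv : P ≠ Set.univ)
    {q : Y} (hq : q ∈ interior P) (y : Y) :
    BddAbove {t : ℝ | y - t • q ∈ P} := by
  by_contra hb
  have h : ∀ n : ℕ, ∃ t : ℝ, y - t • q ∈ P ∧ (n:ℝ) < t := by
    intro n
    rcases not_bddAbove_iff.mp hb n with ⟨t, ht, hnt⟩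
    exact ⟨t, ht, hnt⟩
  choose u hu hun using h
  have hu0 : ∀ n, 0 < u n := fun n => lt_of_le_of_lt (Nat.cast_nonneg n) (hun n)
  have htop : Filter.Tendsto u Filter.atTop Filter.atTop :=
    Filter.tendsto_atTop_mono (fun n => (hun n).le) tendsto_natCast_atTop_atTop
  have hinv : Filter.Tendsto (fun n => (u n)⁻¹) Filter.atTop (nhds (0:ℝ)) :=
    Filter.Tendsto.inv_tendsto_atTop htop
  have hlim : Filter.Tendsto (fun n => (u n)⁻¹ • y - q) Filter.atTop (nhds (-q)) := by
    have h1 : Filter.Tendsto (fun n => (u n)⁻¹ • y) Filter.atTop (nhds ((0:ℝ) • y)) :=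
      hinv.smul_const y
    rw [zero_smul] at h1
    simpa using h1.sub_const q
  have hmemP : ∀ n, (u n)⁻¹ • y - q ∈ P := by
    intro n
    have h2 := hPcone (u n)⁻¹ (inv_pos.mpr (hu0 n)) _ (hu n)
    rwa [smul_sub, smul_smul, inv_mul_cancel₀ (hu0 n).ne', one_smul] at h2
  have hnq : -q ∈ P := hPclosed.mem_of_tendsto hlim (Filter.Eventually.of_forall hmemP)
  have h0 : (0:Y) ∈ interior P := by
    have := psiAux_add_interior hPconv hPcone hq hnq
    simpa using this
  exact psiAux_zero_not_interior hPcone hPuniv h0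

lemma psiAux_mem {P : Set Y} (hPclosed : IsClosed P) (hPconv : Convex ℝ P)
    (hPcone : ∀ c : ℝ, 0 < c → ∀ y ∈ P, c • y ∈ P) (hPuniv : P ≠ Set.univ)
    {q : Y} (hq : q ∈ interior P) (y : Y) : y - psi P q y • q ∈ P := by
  have hcl : IsClosed {t : ℝ | y - t • q ∈ P} :=
    hPclosed.preimage (continuous_const.sub (continuous_id.smul continuous_const))
  exact hcl.csSup_mem (psiAux_Sset_nonempty hPcone hq y)
    (psiAux_Sset_bddAbove hPclosed hPconv hPcone hPuniv hq y)

lemma psiAux_le_psi {P : Set Y} (hPclosed : IsClosed P) (hPconv : Convex ℝ P)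
    (hPcone : ∀ c : ℝ, 0 < c → ∀ y ∈ P, c • y ∈ P) (hPuniv : P ≠ Set.univ)
    {q : Y} (hq : q ∈ interior P) {y : Y} {t : ℝ} (h : y - t • q ∈ P) :
    t ≤ psi P q y :=
  le_csSup (psiAux_Sset_bddAbove hPclosed hPconv hPcone hPuniv hq y) h

lemma psiAux_of_le_psi {P : Set Y} (hPclosed : IsClosed P) (hPconv : Convex ℝ P)
    (hPcone : ∀ c : ℝ, 0 < c → ∀ y ∈ P, c • y ∈ P) (hPuniv : P ≠ Set.univ)
    {q : Y} (hq : q ∈ interior P) {y : Y} {t : ℝ} (h : t ≤ psi P q y) :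
    y - t • q ∈ P := by
  have h1 : y - psi P q y • q ∈ P := psiAux_mem hPclosed hPconv hPcone hPuniv hq y
  rcases eq_or_lt_of_le h with h2 | h2
  · rwa [h2]
  · have h3 : (psi P q y - t) • q ∈ P := hPcone _ (by linarith) q (interior_subset hq)
    have h4 := psiAux_add_mem hPconv hPcone h1 h3
    have heq : y - psi P q y • q + (psi P q y - t) • q = y - t • q := by
      rw [sub_smul]; abel
    rwa [heq] at h4

lemma psiAux_lt_psi {P : Set Y} (hPclosed : IsClosed P) (hPconv : Convex ℝ P)
    (hPcone : ∀ c : ℝ, 0 < c → ∀ y ∈ P, c • y ∈ P) (hPuniv : P ≠ Set.univ)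
    {q : Y} (hq : q ∈ interior P) {y : Y} {t : ℝ} (h : y - t • q ∈ interior P) :
    t < psi P q y := by
  have hcont : Continuous fun s : ℝ => y - s • q :=
    continuous_const.sub (continuous_id.smul continuous_const)
  have hopen : IsOpen {s : ℝ | y - s • q ∈ interior P} := isOpen_interior.preimage hcont
  obtain ⟨ε, hε, hball⟩ := Metric.mem_nhds_iff.mp (hopen.mem_nhds h)
  have hc : t + ε/2 ∈ Metric.ball t ε := by
    simp only [Metric.mem_ball, Real.dist_eq, add_sub_cancel_left]
    rw [abs_of_pos (by positivity)]
    linarith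
  have h2 : y - (t + ε/2) • q ∈ P := interior_subset (hball hc)
  have h3 := psiAux_le_psi hPclosed hPconv hPcone hPuniv hq h2
  linarith

lemma psiAux_psi_lt {P : Set Y} (hPconv : Convex ℝ P)
    (hPcone : ∀ c : ℝ, 0 < c → ∀ y ∈ P, c • y ∈ P)
    {q : Y} (hq : q ∈ interior P) {y : Y} {t : ℝ} (h : t < psi P q y) :
    y - t • q ∈ interior P := by
  obtain ⟨s, hs, hts⟩ := exists_lt_of_lt_csSup (psiAux_Sset_nonempty hPcone hq y) h
  have h2 : (s - t) • q ∈ interior P := psiAux_smul_interior hPcone (by linarith) hq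
  have h3 := psiAux_add_interior hPconv hPcone h2 hs
  have heq : (s - t) • q + (y - s • q) = y - t • q := by
    rw [sub_smul]; abel
  rwa [heq] at h3

lemma psiAux_strict_mono {P : Set Y} (hPclosed : IsClosed P) (hPconv : Convex ℝ P)
    (hPcone : ∀ c : ℝ, 0 < c → ∀ y ∈ P, c • y ∈ P) (hPuniv : P ≠ Set.univ)
    {q : Y} (hq : q ∈ interior P) {w v : Y} (h : v - w ∈ interior P) :
    psi P q w < psi P q v := by
  have h1 : w - psi P q w • q ∈ P := psiAux_mem hPclosed hPconv hPcone hPuniv hq w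
  have h2 := psiAux_add_interior hPconv hPcone h h1
  have heq : v - w + (w - psi P q w • q) = v - psi P q w • q := by abel
  rw [heq] at h2
  exact psiAux_lt_psi hPclosed hPconv hPcone hPuniv hq h2

end GerstewitzAux

/-- If `F` is `q`-srgi, satisfies assumption (A), `Colev_{<ˡ}(F, F(x₀))` is relatively
compact for some `x₀`, and `F(X)` is `P`-bounded, then `l-SWEff(F)` is nonempty. -/
theorem stmt15 {X Y : Type*} [TopologicalSpace X] [T2Space X]
    [AddCommGroup Y] [Module ℝ Y] [TopologicalSpace Y]
    [IsTopologicalAddGroup Y] [ContinuousSMul ℝ Y] [T2Space Y]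
    (P : Set Y) (hPclosed : IsClosed P) (hPconv : Convex ℝ P)
    (hP0 : (0 : Y) ∈ P) (hPcone : ∀ c : ℝ, 0 < c → ∀ y ∈ P, c • y ∈ P)
    (hPne : P ≠ {0}) (hPuniv : P ≠ Set.univ)
    (q : Y) (hq : q ∈ interior P)
    (F : X → Set Y) (hF : ∀ x, (F x).Nonempty)
    (hsrgi : Srgi P q F) (hA : AssumptionA P q F)
    (x₀ : X) (hcpt : IsCompact (closure (ColevB P F (F x₀))))
    (hbdd : PBounded P (⋃ x : X, F x)) :
    ∃ xbar : X, SWEff P F xbar := by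
  classical
  choose g hgF hgmin using hA
  set m : X → ℝ := fun x => psi P q (g x) with hm
  -- Colev characterization
  have hColev : ∀ (x : X) (lam : ℝ), x ∈ Colev P q F lam ↔ m x ≤ lam := by
    intro x lam
    constructor
    · intro h
      by_contra hlt
      push_neg at hlt
      apply h
      intro y hy
      exact psiAux_psi_lt hPconv hPcone hq (lt_of_lt_of_le hlt (hgmin x y hy))
    · intro hle hsub
      have h1 := hsub (hgF x)
      exact absurd (psiAux_lt_psi hPclosed hPconv hPcone hPuniv hq h1) (not_lt.mpr hle)
  -- domination
  have hdom : ∀ a b : X, F a ⊆ F b + interior P → m b < m a := by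
    intro a b hsub
    obtain ⟨w, hw, p, hp, hwp⟩ := Set.mem_add.mp (hsub (hgF a))
    have hdiff : g a - w ∈ interior P := by
      rw [← hwp]; simpa using hp
    have h1 : psi P q w < psi P q (g a) :=
      psiAux_strict_mono hPclosed hPconv hPcone hPuniv hq hdiff
    exact lt_of_le_of_lt (hgmin b w hw) h1
  -- the set T and its supremum M
  set T : Set ℝ := {t : ℝ | ∀ x : X, ∀ z ∈ F x, z - t • q ∈ P} with hT
  have hTne : T.Nonempty := by
    have hUopen : IsOpen {u : Y | q + u ∈ interior P} :=
      isOpen_interior.preimage (continuous_const.add continuous_id)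
    have hU0 : (0:Y) ∈ {u : Y | q + u ∈ interior P} := by simpa using hq
    obtain ⟨r, hr, hsub⟩ := hbdd _ (hUopen.mem_nhds hU0)
    refine ⟨-r, ?_⟩
    intro x w hw
    have hwU : w ∈ r • {u : Y | q + u ∈ interior P} + P :=
      hsub (Set.mem_iUnion.mpr ⟨x, hw⟩)
    obtain ⟨a, ha, b, hb, hab⟩ := Set.mem_add.mp hwU
    obtain ⟨u, hu, rfl⟩ := Set.mem_smul_set.mp ha
    have h1 : r • (q + u) ∈ P := hPcone r hr _ (interior_subset hu)
    have h2 := psiAux_add_mem hPconv hPcone h1 hb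
    have heq : r • (q + u) + b = w - (-r) • q := by
      rw [← hab, smul_add, neg_smul]; abel
    rwa [heq] at h2
  have hTbdd : BddAbove T := by
    refine ⟨m x₀, ?_⟩
    intro t ht
    exact psiAux_le_psi hPclosed hPconv hPcone hPuniv hq (ht x₀ _ (hgF x₀))
  set M : ℝ := sSup T with hM
  have hM_le_m : ∀ x : X, M ≤ m x := by
    intro x
    exact csSup_le hTne fun t ht =>
      psiAux_le_psi hPclosed hPconv hPcone hPuniv hq (ht x _ (hgF x))
  have hmemT : ∀ t : ℝ, (∀ x : X, t ≤ m x) → t ∈ T := by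
    intro t h x w hw
    exact psiAux_of_le_psi hPclosed hPconv hPcone hPuniv hq (le_trans (h x) (hgmin x w hw))
  have hexists_lt : ∀ lam : ℝ, M < lam → ∃ x : X, m x < lam := by
    intro lam hlam
    by_contra h
    push_neg at h
    exact absurd (le_csSup hTbdd (hmemT lam h)) (not_le.mpr hlam)
  -- relation between Mq and M
  have hMq_le : Mq P q F ≤ (M : EReal) := by
    apply sSup_le
    rintro _ ⟨t, ht, rfl⟩
    show (t : EReal) ≤ (M : EReal)
    exact_mod_cast le_csSup hTbdd ht
  have hle_Mq : (M : EReal) ≤ Mq P q F := by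
    by_contra h
    push_neg at h
    obtain ⟨a, ha1, ha2⟩ := EReal.exists_between_coe_real h
    have ha2' : a < M := by exact_mod_cast ha2
    obtain ⟨t, ht, hat⟩ := exists_lt_of_lt_csSup hTne ha2'
    have h1 : (t : EReal) ≤ Mq P q F := le_sSup ⟨t, ht, rfl⟩
    have h2 : (t : EReal) < (a : EReal) := lt_of_le_of_lt h1 ha1
    have : t < a := by exact_mod_cast h2
    linarith
  -- main case split
  by_cases hx0 : m x₀ ≤ M
  · refine ⟨x₀, ?_⟩
    rintro ⟨x, hxne, hsub⟩
    have h1 := hdom x₀ x hsub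
    have h2 := hM_le_m x
    linarith
  · push_neg at hx0
    by_contra hno
    push_neg at hno
    have hstrictM : ∀ x : X, M < m x := by
      intro x
      obtain ⟨x', _, hsub⟩ := not_not.mp (hno x)
      exact lt_of_le_of_lt (hM_le_m x') (hdom x x' hsub)
    have hUx : ∀ x : X, ∃ U ∈ nhds x, ∃ r : ℝ, M < r ∧ U ∩ Colev P q F r = ∅ := by
      intro x
      set lam : ℝ := (M + m x) / 2 with hlam
      have h1 : M < lam := by have := hstrictM x; rw [hlam]; linarith
      have h2 : lam < m x := by have := hstrictM x; rw [hlam]; linarith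
      have hnotin : x ∉ Colev P q F lam := by
        rw [hColev]; linarith
      obtain ⟨U, hU, r, hr, hdisj⟩ :=
        hsrgi lam (lt_of_le_of_lt hMq_le (by exact_mod_cast h1)) x hnotin
      refine ⟨U, hU, r, ?_, hdisj⟩
      have : (M : EReal) < (r : EReal) := lt_of_le_of_lt hle_Mq hr
      exact_mod_cast this
    choose U hU r hr hdisj using hUx
    obtain ⟨tfin, htfin⟩ := hcpt.elim_nhds_subcover U fun x _ => hU x
    have hx0C : x₀ ∈ ColevB P F (F x₀) := by
      intro hsub
      exact absurd (hdom x₀ x₀ hsub) (lt_irrefl _)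
    have hx0cl : x₀ ∈ closure (ColevB P F (F x₀)) := subset_closure hx0C
    obtain ⟨i0, hi0⟩ := Set.mem_iUnion.mp (htfin.2 hx0cl)
    obtain ⟨hi0t, _⟩ := Set.mem_iUnion.mp hi0
    have htne : tfin.Nonempty := ⟨i0, hi0t⟩
    set rstar : ℝ := tfin.inf' htne r with hrstar
    have hMrstar : M < rstar := by
      rw [hrstar, Finset.lt_inf'_iff]
      intro i _
      exact hr i
    set s : ℝ := min rstar (m x₀) with hs
    have hMs : M < s := lt_min hMrstar hx0
    set lam : ℝ := (M + s) / 2 with hlam2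
    have hMlam : M < lam := by rw [hlam2]; linarith
    have hlams : lam < s := by rw [hlam2]; linarith
    obtain ⟨x1, hx1⟩ := hexists_lt lam hMlam
    have hx1Colev : x1 ∈ Colev P q F lam := (hColev x1 lam).mpr hx1.le
    have hx1B : x1 ∈ ColevB P F (F x₀) := by
      intro hsub
      have h1 := hdom x1 x₀ hsub
      have h2 : lam < m x₀ := lt_of_lt_of_le hlams (min_le_right _ _)
      linarith
    have hx1cl : x1 ∈ closure (ColevB P F (F x₀)) := subset_closure hx1B
    obtain ⟨i, hi⟩ := Set.mem_iUnion.mp (htfin.2 hx1cl)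
    obtain ⟨hit, hx1U⟩ := Set.mem_iUnion.mp hi
    have hlamri : lam ≤ r i := le_of_lt (lt_of_lt_of_le hlams
      (le_trans (min_le_left _ _) (Finset.inf'_le r hit)))
    have hx1Colevr : x1 ∈ Colev P q F (r i) := (hColev x1 (r i)).mpr (le_trans hx1.le hlamri)
    exact Set.eq_empty_iff_forall_notMem.mp (hdisj i) x1 ⟨hx1U, hx1Colevr⟩
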